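/- Let H_{k₀} = ⋂_{l≥k₀} ⋃_{0≤p<q_l} [(2p+1)/(2q_l) − 1/(4q_l), (2p+1)/(2q_l) + 1/(4q_l)] for a strictly increasing sequence of positive integers (q_l). If q_{l+1} ≥ 4 q_l for all l, then H_{k₀} is a nonempty compact subset of [0,1] with empty interior. -/

import Mathlib

open Set

private lemma nat_ceil_mult (a n : ℕ) (hn : 0 < n) : ∃ k, a ≤ n * k ∧ n * k < a + n := by
  refine ⟨(a + n - 1) / n, ?_, ?_⟩ <;>
  · have h := Nat.div_add_mod (a + n - 1) n
    have h2 : (a + n - 1) % n < n := Nat.mod_lt _ hn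
    generalize hg : n * ((a + n - 1) / n) = t at h ⊢
    omega

private lemma step_lemma (b c p : ℕ) (hb : 1 ≤ b) (h4 : 4 * b ≤ c) (hp : p < b) :
    ∃ p' < c, c * (4 * p + 1) ≤ 4 * b * p' + b ∧ 4 * b * p' + 3 * b ≤ c * (4 * p + 3) := by
  have hm : b ≤ c * (4 * p + 1) := le_trans (by omega) (Nat.le_mul_of_pos_right c (by omega))
  obtain ⟨k, hk1, hk2⟩ := nat_ceil_mult (c * (4 * p + 1) - b) (4 * b) (by omega)
  have hMm : c * (4 * p + 3) = c * (4 * p + 1) + 2 * c := by ring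
  have hgoal2 : 4 * b * k + 3 * b ≤ c * (4 * p + 3) := by
    generalize ht : 4 * b * k = t at hk1 hk2 ⊢
    omega
  have hkc : k < c := by
    have h6 : c * (4 * p + 3) ≤ c * (4 * b - 1) := Nat.mul_le_mul_left c (by omega)
    have h7 : c * (4 * b - 1) + c = 4 * b * c := by
      have : (4 * b - 1) + 1 = 4 * b := by omega
      calc c * (4 * b - 1) + c = c * ((4 * b - 1) + 1) := by ring
        _ = 4 * b * c := by rw [this]; ring
    have h8 : 4 * b * k < 4 * b * c := by
      have := le_trans hgoal2 h6
      omega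
    exact Nat.lt_of_mul_lt_mul_left h8
  refine ⟨k, hkc, ?_, hgoal2⟩
  generalize ht : 4 * b * k = t at hk1 hk2 ⊢
  omega

private lemma endL (a d : ℕ) (hd : 0 < d) :
    (2 * (a : ℝ) + 1) / (2 * d) - 1 / (4 * d) = (4 * a + 1) / (4 * d) := by
  have hd' : (0 : ℝ) < d := by exact_mod_cast hd
  field_simp
  ring

private lemma endR (a d : ℕ) (hd : 0 < d) :
    (2 * (a : ℝ) + 1) / (2 * d) + 1 / (4 * d) = (4 * a + 3) / (4 * d) := by
  have hd' : (0 : ℝ) < d := by exact_mod_cast hd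
  field_simp
  ring

private lemma icc_sub (b c p p' : ℕ) (hb : 0 < b) (hc : 0 < c)
    (h1 : c * (4 * p + 1) ≤ 4 * b * p' + b) (h2 : 4 * b * p' + 3 * b ≤ c * (4 * p + 3)) :
    Set.Icc ((2 * (p' : ℝ) + 1) / (2 * c) - 1 / (4 * c)) ((2 * (p' : ℝ) + 1) / (2 * c) + 1 / (4 * c))
      ⊆ Set.Icc ((2 * (p : ℝ) + 1) / (2 * b) - 1 / (4 * b)) ((2 * (p : ℝ) + 1) / (2 * b) + 1 / (4 * b)) := by
  have hb' : (0 : ℝ) < b := by exact_mod_cast hb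
  have hc' : (0 : ℝ) < c := by exact_mod_cast hc
  have h1' : (c : ℝ) * (4 * p + 1) ≤ 4 * b * p' + b := by exact_mod_cast h1
  have h2' : 4 * (b : ℝ) * p' + 3 * b ≤ c * (4 * p + 3) := by exact_mod_cast h2
  rw [endL p b hb, endR p b hb, endL p' c hc, endR p' c hc]
  apply Set.Icc_subset_Icc
  · rw [div_le_div_iff₀ (by positivity) (by positivity)]
    nlinarith
  · rw [div_le_div_iff₀ (by positivity) (by positivity)]
    nlinarith

/-- The set `H_{k₀}` is a nonempty compact subset of `[0,1]` with empty
interior, provided `q_{l+1} ≥ 4 q_l`. -/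
theorem H_k0_cantor (q : ℕ → ℕ) (k₀ : ℕ)
    (hq : StrictMono q) (hq1 : ∀ l, 1 ≤ q l)
    (hgrow : ∀ l, 4 * q l ≤ q (l + 1)) :
    (⋂ l ∈ Set.Ici k₀, ⋃ p ∈ Finset.range (q l),
        Set.Icc ((2 * (p : ℝ) + 1) / (2 * (q l : ℝ)) - 1 / (4 * (q l : ℝ)))
                ((2 * (p : ℝ) + 1) / (2 * (q l : ℝ)) + 1 / (4 * (q l : ℝ)))).Nonempty ∧
    IsCompact (⋂ l ∈ Set.Ici k₀, ⋃ p ∈ Finset.range (q l),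
        Set.Icc ((2 * (p : ℝ) + 1) / (2 * (q l : ℝ)) - 1 / (4 * (q l : ℝ)))
                ((2 * (p : ℝ) + 1) / (2 * (q l : ℝ)) + 1 / (4 * (q l : ℝ)))) ∧
    (⋂ l ∈ Set.Ici k₀, ⋃ p ∈ Finset.range (q l),
        Set.Icc ((2 * (p : ℝ) + 1) / (2 * (q l : ℝ)) - 1 / (4 * (q l : ℝ)))
                ((2 * (p : ℝ) + 1) / (2 * (q l : ℝ)) + 1 / (4 * (q l : ℝ))))
      ⊆ Set.Icc (0 : ℝ) 1 ∧
    interior (⋂ l ∈ Set.Ici k₀, ⋃ p ∈ Finset.range (q l),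
        Set.Icc ((2 * (p : ℝ) + 1) / (2 * (q l : ℝ)) - 1 / (4 * (q l : ℝ)))
                ((2 * (p : ℝ) + 1) / (2 * (q l : ℝ)) + 1 / (4 * (q l : ℝ)))) = ∅ := by
  set S : ℕ → Set ℝ := fun l => ⋃ p ∈ Finset.range (q l),
      Set.Icc ((2 * (p : ℝ) + 1) / (2 * (q l : ℝ)) - 1 / (4 * (q l : ℝ)))
              ((2 * (p : ℝ) + 1) / (2 * (q l : ℝ)) + 1 / (4 * (q l : ℝ))) with hS
  set H : Set ℝ := ⋂ l ∈ Set.Ici k₀, S l with hH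
  -- closedness
  have hSclosed : ∀ l, IsClosed (S l) := by
    intro l
    exact isClosed_biUnion_finset fun p _ => isClosed_Icc
  have hHclosed : IsClosed H := isClosed_biInter fun l _ => hSclosed l
  -- subset of [0,1]
  have hSsub : ∀ l, S l ⊆ Set.Icc (0 : ℝ) 1 := by
    intro l x hx
    simp only [hS, Set.mem_iUnion, Finset.mem_range] at hx
    obtain ⟨p, hp, hx⟩ := hx
    have hql : (0 : ℝ) < q l := by exact_mod_cast hq1 l
    rw [endL p (q l) (hq1 l), endR p (q l) (hq1 l)] at hx
    constructor
    · refine le_trans (by positivity) hx.1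
    · refine le_trans hx.2 ?_
      rw [div_le_one (by positivity)]
      have : (4 * (p : ℝ) + 3) ≤ 4 * q l := by
        have : (p : ℝ) + 1 ≤ q l := by exact_mod_cast hp
        linarith
      linarith
  have hHsub : H ⊆ Set.Icc (0 : ℝ) 1 := by
    intro x hx
    exact hSsub k₀ (Set.mem_iInter₂.mp hx k₀ (Set.self_mem_Ici))
  have hHcompact : IsCompact H := isCompact_Icc.of_isClosed_subset hHclosed hHsub
  -- nonemptiness: build a nested chain of intervals
  have hFex : ∀ l p, p < q l → ∃ p' < q (l + 1),
      q (l + 1) * (4 * p + 1) ≤ 4 * q l * p' + q l ∧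
      4 * q l * p' + 3 * q l ≤ q (l + 1) * (4 * p + 3) :=
    fun l p hp => step_lemma (q l) (q (l + 1)) p (hq1 l) (hgrow l) hp
  choose F hF1 hF2 hF3 using hFex
  let g : (n : ℕ) → {p : ℕ // p < q (k₀ + n)} := fun n =>
    Nat.rec ⟨0, hq1 k₀⟩ (fun n ih => ⟨F (k₀ + n) ih.1 ih.2, hF1 (k₀ + n) ih.1 ih.2⟩) n
  let I : ℕ → Set ℝ := fun n =>
    Set.Icc ((2 * ((g n).1 : ℝ) + 1) / (2 * (q (k₀ + n) : ℝ)) - 1 / (4 * (q (k₀ + n) : ℝ)))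
            ((2 * ((g n).1 : ℝ) + 1) / (2 * (q (k₀ + n) : ℝ)) + 1 / (4 * (q (k₀ + n) : ℝ)))
  have hInested : ∀ n, I (n + 1) ⊆ I n := by
    intro n
    have := icc_sub (q (k₀ + n)) (q (k₀ + n + 1)) (g n).1 (g (n + 1)).1 (hq1 _) (hq1 _)
      (hF2 (k₀ + n) (g n).1 (g n).2) (hF3 (k₀ + n) (g n).1 (g n).2)
    exact this
  have hInonempty : ∀ n, (I n).Nonempty := by
    intro n
    refine ⟨(2 * ((g n).1 : ℝ) + 1) / (2 * (q (k₀ + n) : ℝ)), ?_, ?_⟩ <;>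
    · have hql : (0 : ℝ) < q (k₀ + n) := by exact_mod_cast hq1 (k₀ + n)
      have : (0:ℝ) < 1 / (4 * (q (k₀ + n) : ℝ)) := by positivity
      linarith
  have hIinter : (⋂ n, I n).Nonempty := by
    refine IsCompact.nonempty_iInter_of_sequence_nonempty_isCompact_isClosed I hInested
      hInonempty isCompact_Icc (fun n => isClosed_Icc)
  have hHnonempty : H.Nonempty := by
    obtain ⟨x, hx⟩ := hIinter
    refine ⟨x, ?_⟩
    rw [hH, Set.mem_iInter₂]
    intro l hl
    obtain ⟨n, rfl⟩ := Nat.exists_eq_add_of_le hl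
    have hxI : x ∈ I n := Set.mem_iInter.mp hx n
    simp only [hS, Set.mem_iUnion, Finset.mem_range]
    exact ⟨(g n).1, (g n).2, hxI⟩
  -- empty interior
  have hIntEmpty : interior H = ∅ := by
    by_contra hne
    obtain ⟨x, hx⟩ := Set.nonempty_iff_ne_empty.mpr hne
    rw [mem_interior_iff_mem_nhds, Metric.mem_nhds_iff] at hx
    obtain ⟨ε, hε, hball⟩ := hx
    -- choose l ≥ k₀ with 1/(q l) < ε
    obtain ⟨N, hN⟩ := exists_nat_gt (1 / ε)
    set l := max k₀ N with hl
    have hlk : k₀ ≤ l := le_max_left _ _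
    have hqlN : (N : ℝ) ≤ q l := by
      have : N ≤ q l := le_trans (le_max_right k₀ N) (hq.le_apply)
      exact_mod_cast this
    have hql : (0 : ℝ) < q l := by exact_mod_cast hq1 l
    have hinv : 1 / (q l : ℝ) < ε := by
      rw [div_lt_iff₀ hql]
      rw [div_lt_iff₀ hε] at hN
      nlinarith
    set k : ℤ := ⌊(q l : ℝ) * x⌋ with hk
    have hfl1 : (k : ℝ) ≤ (q l : ℝ) * x := Int.floor_le _
    have hfl2 : (q l : ℝ) * x < k + 1 := Int.lt_floor_add_one _
    have hdist : ((k : ℝ) / (q l : ℝ)) ∈ Metric.ball x ε := by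
      rw [Metric.mem_ball, Real.dist_eq, abs_lt]
      constructor
      · have hlt : x - 1 / (q l : ℝ) < (k : ℝ) / q l := by
          rw [sub_lt_iff_lt_add, ← add_div, lt_div_iff₀ hql]
          nlinarith
        linarith
      · rw [sub_lt_iff_lt_add]
        have : (k : ℝ) / q l ≤ x := by
          rw [div_le_iff₀ hql]; linarith
        linarith
    have hmem : ((k : ℝ) / (q l : ℝ)) ∈ S l := Set.mem_iInter₂.mp (hball hdist) l hlk
    simp only [hS, Set.mem_iUnion, Finset.mem_range] at hmem
    obtain ⟨p, hp, hmem⟩ := hmem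
    rw [endL p (q l) (hq1 l), endR p (q l) (hq1 l)] at hmem
    obtain ⟨h1, h2⟩ := hmem
    rw [div_le_div_iff₀ (by positivity) hql] at h1
    rw [div_le_div_iff₀ hql (by positivity)] at h2
    -- h1 : (4p+1) * q l ≤ k * (4 q l); h2 : k * (4 q l) ≤ (4p+3) * q l
    have h1' : (4 * (p : ℝ) + 1) ≤ 4 * k := by
      have := mul_le_mul_of_nonneg_right h1 (le_of_lt (inv_pos.mpr hql))
      field_simp at this
      nlinarith
    have h2' : (4 : ℝ) * k ≤ 4 * p + 3 := by
      nlinarith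
    have h1'' : (4 * (p : ℤ) + 1) ≤ 4 * k := by exact_mod_cast h1'
    have h2'' : (4 : ℤ) * k ≤ 4 * p + 3 := by exact_mod_cast h2'
    omega
  exact ⟨hHnonempty, hHcompact, hHsub, hIntEmpty⟩
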